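/- arXiv:1806.05439 — 2 statements merged into one kernel-verified Lean document; each statement's English description precedes it below -/
import Mathlib

section
/- The seminorm N₁(g) = limsup_{R→∞} R^{-d} ∫_{I_R} |g(x)| dx, where I_R = {x ∈ ℝᵈ : max_i |x_i| ≤ R/2}, is a norm on the space of trigonometric polynomials on ℝᵈ (finite sums ∑_λ a_λ e^{2πi λ·x}); that is, if P is a trigonometric polynomial with N₁(P) = 0, then P ≡ 0. -/
open MeasureTheory Filter Topology Complex

section helper
variable {d : ℕ}

lemma norm_exp_I_mul' (a : ℂ) (h : a.re = 0) : ‖Complex.exp a‖ = 1 := by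
  rw [Complex.norm_exp, h, Real.exp_zero]

lemma oneD_val (c R : ℝ) (hR : 0 ≤ R) (hc : c ≠ 0) :
    ∫ t in Set.Icc (-(R/2)) (R/2), Complex.exp (2 * Real.pi * Complex.I * c * t) =
      (Complex.exp (2*Real.pi*Complex.I*c*(R/2)) - Complex.exp (2*Real.pi*Complex.I*c*(-(R/2)))) / (2*Real.pi*Complex.I*c) := by
  rw [MeasureTheory.integral_Icc_eq_integral_Ioc,
    ← intervalIntegral.integral_of_le (by linarith : -(R/2) ≤ R/2)]
  rw [integral_exp_mul_complex (c := 2*Real.pi*Complex.I*c)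
    (by simp [Real.pi_ne_zero, Complex.I_ne_zero, hc])]
  push_cast
  ring_nf

lemma oneD_bound (c R : ℝ) (hc : c ≠ 0) (hR : 0 ≤ R) :
    ‖∫ t in Set.Icc (-(R/2)) (R/2), Complex.exp (2 * Real.pi * Complex.I * c * t)‖ ≤
      1 / (Real.pi * |c|) := by
  rw [oneD_val c R hR hc, norm_div]
  have h2 : ‖(2*(Real.pi:ℂ)*Complex.I*c)‖ = 2*(Real.pi*|c|) := by
    simp [abs_of_pos Real.pi_pos]; ring
  rw [h2]
  have hb : ‖Complex.exp (2*Real.pi*Complex.I*c*(R/2)) - Complex.exp (2*Real.pi*Complex.I*c*(-(R/2)))‖ ≤ 2 := by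
    refine (norm_sub_le _ _).trans ?_
    rw [norm_exp_I_mul' _ (by simp), norm_exp_I_mul' _ (by simp)]; norm_num
  have hpi : 0 < Real.pi * |c| := by positivity
  rw [div_le_div_iff₀ (by positivity) hpi]
  nlinarith

lemma oneD_triv (c R : ℝ) (hR : 0 ≤ R) :
    ‖∫ t in Set.Icc (-(R/2)) (R/2), Complex.exp (2 * Real.pi * Complex.I * c * t)‖ ≤ R := by
  have := norm_setIntegral_le_of_norm_le_const (μ := volume) (s := Set.Icc (-(R/2)) (R/2))
    (f := fun t : ℝ => Complex.exp (2 * Real.pi * Complex.I * c * t)) (C := 1)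
    (by simp [Real.volume_Icc])
    (fun x _ => le_of_eq (norm_exp_I_mul' _ (by simp)))
  refine this.trans ?_
  rw [Measure.real, Real.volume_Icc, one_mul, ENNReal.toReal_ofReal (by linarith)]
  linarith

lemma oneD_zero (R : ℝ) (hR : 0 ≤ R) :
    ∫ t in Set.Icc (-(R/2)) (R/2), Complex.exp (2 * Real.pi * Complex.I * (0:ℝ) * t) = R := by
  simp [Real.volume_Icc]
  linarith


variable {d : ℕ}


lemma box_eq (R : ℝ) : {x : EuclideanSpace ℝ (Fin d) | ∀ i, |x i| ≤ R / 2}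
    = ((MeasurableEquiv.toLp 2 (Fin d → ℝ)).symm) ⁻¹'
      (Set.pi Set.univ fun _ => Set.Icc (-(R/2)) (R/2)) := by
  ext x
  simp only [Set.mem_preimage, Set.mem_pi, Set.mem_univ, forall_true_left, Set.mem_Icc,
    Set.mem_setOf_eq]
  exact forall_congr' fun i => abs_le

lemma box_measurable (R : ℝ) :
    MeasurableSet {x : EuclideanSpace ℝ (Fin d) | ∀ i, |x i| ≤ R / 2} := by
  rw [box_eq]
  exact (MeasurableSet.univ_pi fun i => measurableSet_Icc).preimage
    (MeasurableEquiv.measurable _)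

lemma vol_box (R : ℝ) :
    volume {x : EuclideanSpace ℝ (Fin d) | ∀ i, |x i| ≤ R / 2} = (ENNReal.ofReal R) ^ d := by
  rw [box_eq]
  rw [MeasurePreserving.measure_preimage (EuclideanSpace.volume_preserving_symm_measurableEquiv_toLp (Fin d))
    (MeasurableSet.univ_pi fun i => measurableSet_Icc).nullMeasurableSet]
  rw [volume_pi_pi]
  rw [Real.volume_Icc, Finset.prod_const, Finset.card_univ, Fintype.card_fin]
  congr 1
  ring

lemma vol_box_ne_top (R : ℝ) :
    volume {x : EuclideanSpace ℝ (Fin d) | ∀ i, |x i| ≤ R / 2} ≠ ⊤ := by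
  rw [vol_box]
  exact ENNReal.pow_ne_top ENNReal.ofReal_ne_top

lemma char_continuous (μ : EuclideanSpace ℝ (Fin d)) :
    Continuous fun x : EuclideanSpace ℝ (Fin d) =>
      Complex.exp (2 * Real.pi * Complex.I * ((inner ℝ μ x : ℝ) : ℂ)) :=
  Complex.continuous_exp.comp (continuous_const.mul
    (Complex.continuous_ofReal.comp ((continuous_const (y := μ)).inner continuous_id)))

lemma char_integrableOn (μ : EuclideanSpace ℝ (Fin d)) (R : ℝ) :
    IntegrableOn (fun x : EuclideanSpace ℝ (Fin d) =>
      Complex.exp (2 * Real.pi * Complex.I * ((inner ℝ μ x : ℝ) : ℂ)))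
      {x : EuclideanSpace ℝ (Fin d) | ∀ i, |x i| ≤ R / 2} := by
  refine Measure.integrableOn_of_bounded (vol_box_ne_top R)
    (char_continuous μ).aestronglyMeasurable (M := 1) (ae_of_all _ fun x => ?_)
  exact le_of_eq (norm_exp_I_mul' _ (by simp))


lemma boxInt (μ : EuclideanSpace ℝ (Fin d)) (R : ℝ) :
    ∫ x in {x : EuclideanSpace ℝ (Fin d) | ∀ i, |x i| ≤ R / 2},
      Complex.exp (2 * Real.pi * Complex.I * ((inner ℝ μ x : ℝ) : ℂ))
    = ∏ i, ∫ t in Set.Icc (-(R/2)) (R/2), Complex.exp (2 * Real.pi * Complex.I * (μ i) * t) := by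
  have hS : MeasurableSet (Set.pi Set.univ fun _ : Fin d => Set.Icc (-(R/2)) (R/2)) :=
    MeasurableSet.univ_pi fun i => measurableSet_Icc
  set g : (Fin d → ℝ) → ℂ :=
    fun y => ∏ i, Complex.exp (2 * Real.pi * Complex.I * (μ i) * (y i)) with hg
  rw [box_eq]
  have h0 : ∫ x in ((MeasurableEquiv.toLp 2 (Fin d → ℝ)).symm) ⁻¹'
      (Set.pi Set.univ fun _ => Set.Icc (-(R/2)) (R/2)),
      Complex.exp (2 * Real.pi * Complex.I * ((inner ℝ μ x : ℝ) : ℂ))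
      = ∫ y in (Set.pi Set.univ fun _ : Fin d => Set.Icc (-(R/2)) (R/2)), g y := by
    rw [← (EuclideanSpace.volume_preserving_symm_measurableEquiv_toLp (Fin d)).setIntegral_preimage_emb
      (MeasurableEquiv.measurableEmbedding _) g]
    refine setIntegral_congr_fun (by exact (hS.preimage (MeasurableEquiv.measurable _)))
      fun x _ => ?_
    show Complex.exp _ = ∏ i, Complex.exp _
    rw [← Complex.exp_sum]
    congr 1
    have : (inner ℝ μ x : ℝ) = ∑ i, μ i * x i := by
      simp [PiLp.inner_apply, RCLike.inner_apply, conj_trivial, mul_comm]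
    rw [this]
    push_cast
    rw [Finset.mul_sum]
    simp only [MeasurableEquiv.coe_toLp_symm]
    exact Finset.sum_congr rfl fun i _ => by ring
  rw [h0, ← integral_indicator hS]
  have : (Set.pi Set.univ fun _ : Fin d => Set.Icc (-(R/2)) (R/2)).indicator g
      = fun y => ∏ i, (Set.Icc (-(R/2)) (R/2)).indicator
          (fun t : ℝ => Complex.exp (2 * Real.pi * Complex.I * (μ i) * t)) (y i) := by
    ext y
    by_cases h : y ∈ Set.pi Set.univ fun _ : Fin d => Set.Icc (-(R/2)) (R/2)
    · rw [Set.indicator_of_mem h]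
      exact Finset.prod_congr rfl fun i _ =>
        (Set.indicator_of_mem (show y i ∈ Set.Icc (-(R/2)) (R/2) from h i (Set.mem_univ i))
          (fun t : ℝ => Complex.exp (2 * Real.pi * Complex.I * (μ i) * t))).symm
    · rw [Set.indicator_of_notMem h]
      rw [Set.mem_pi] at h
      simp only [Set.mem_univ, forall_true_left] at h
      obtain ⟨i, hi⟩ := not_forall.mp h
      exact (Finset.prod_eq_zero (Finset.mem_univ i) (by rw [Set.indicator_of_notMem hi])).symm
  rw [this]
  refine (MeasureTheory.integral_fintype_prod_eq_prod (ι := Fin d)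
    (fun i => (Set.Icc (-(R/2)) (R/2)).indicator
      (fun t : ℝ => Complex.exp (2 * Real.pi * Complex.I * (μ i) * t)))).trans ?_
  exact Finset.prod_congr rfl fun i _ => integral_indicator measurableSet_Icc


variable {d : ℕ}
lemma F_tendsto_zero :
    Tendsto (fun R : ℝ => (1 / (R:ℂ) ^ d) *
      ∫ x in {x : EuclideanSpace ℝ (Fin d) | ∀ i, |x i| ≤ R / 2},
        Complex.exp (2 * Real.pi * Complex.I * ((inner ℝ (0 : EuclideanSpace ℝ (Fin d)) x : ℝ) : ℂ)))
      atTop (𝓝 1) := by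
  · have : ∀ᶠ R : ℝ in atTop, (1 / (R:ℂ) ^ d) *
        ∫ x in {x : EuclideanSpace ℝ (Fin d) | ∀ i, |x i| ≤ R / 2},
          Complex.exp (2 * Real.pi * Complex.I * ((inner ℝ (0 : EuclideanSpace ℝ (Fin d)) x : ℝ) : ℂ)) = 1 := by
      filter_upwards [eventually_gt_atTop (0:ℝ)] with R hR
      rw [boxInt]
      have : ∀ i : Fin d, (∫ t in Set.Icc (-(R/2)) (R/2),
          Complex.exp (2 * Real.pi * Complex.I * ((0 : EuclideanSpace ℝ (Fin d)) i) * t)) = (R:ℂ) := by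
        intro i
        have h0 : (0 : EuclideanSpace ℝ (Fin d)) i = 0 := rfl
        rw [h0]
        exact oneD_zero R hR.le
      rw [Finset.prod_congr rfl fun i _ => this i, Finset.prod_const, Finset.card_univ,
        Fintype.card_fin]
      rw [one_div, inv_mul_cancel₀]
      exact pow_ne_zero _ (by exact_mod_cast hR.ne')
    exact (tendsto_congr' this).mpr tendsto_const_nhds
lemma F_tendsto_ne (μ : EuclideanSpace ℝ (Fin d)) (hμ : μ ≠ 0) :
    Tendsto (fun R : ℝ => (1 / (R:ℂ) ^ d) *
      ∫ x in {x : EuclideanSpace ℝ (Fin d) | ∀ i, |x i| ≤ R / 2},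
        Complex.exp (2 * Real.pi * Complex.I * ((inner ℝ μ x : ℝ) : ℂ)))
      atTop (𝓝 0) := by
  · obtain ⟨i₀, hi₀⟩ : ∃ i, μ i ≠ 0 := by
      by_contra h
      push_neg at h
      exact hμ (by ext i; exact h i)
    rw [tendsto_zero_iff_norm_tendsto_zero]
    apply squeeze_zero' (Eventually.of_forall fun R => norm_nonneg _)
      (g := fun R => (1 / (Real.pi * |μ i₀|)) * (1 / R))
    · filter_upwards [eventually_ge_atTop (1:ℝ)] with R hR
      have hR0 : (0:ℝ) < R := lt_of_lt_of_le one_pos hR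
      rw [boxInt, norm_mul, norm_prod]
      have hprod : ∏ i, ‖∫ t in Set.Icc (-(R/2)) (R/2),
          Complex.exp (2 * Real.pi * Complex.I * (μ i) * t)‖ ≤
            (1 / (Real.pi * |μ i₀|)) * R ^ (d - 1) := by
        rw [← Finset.prod_erase_mul _ _ (Finset.mem_univ i₀)]
        have h1 : ∏ i ∈ Finset.univ.erase i₀, ‖∫ t in Set.Icc (-(R/2)) (R/2),
            Complex.exp (2 * Real.pi * Complex.I * (μ i) * t)‖ ≤ R ^ (d - 1) := by
          calc _ ≤ ∏ _i ∈ Finset.univ.erase i₀, R :=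
                Finset.prod_le_prod (fun i _ => norm_nonneg _) fun i _ => oneD_triv _ _ hR0.le
            _ = R ^ (d - 1) := by
                rw [Finset.prod_const, Finset.card_erase_of_mem (Finset.mem_univ i₀),
                  Finset.card_univ, Fintype.card_fin]
        calc _ ≤ R ^ (d-1) * (1 / (Real.pi * |μ i₀|)) := by
              apply mul_le_mul h1 (oneD_bound _ _ hi₀ hR0.le) (norm_nonneg _) (by positivity)
          _ = (1 / (Real.pi * |μ i₀|)) * R ^ (d - 1) := by ring
      have hd : 1 ≤ d := i₀.pos
      have hnorm1 : ‖(1 / (R:ℂ) ^ d)‖ = 1 / R ^ d := by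
        rw [norm_div, norm_one, norm_pow, Complex.norm_real, Real.norm_of_nonneg hR0.le]
      rw [hnorm1]
      calc (1 / R ^ d) * ∏ i, ‖_‖ ≤ (1 / R ^ d) * ((1 / (Real.pi * |μ i₀|)) * R ^ (d - 1)) := by
            apply mul_le_mul_of_nonneg_left hprod (by positivity)
        _ = (1 / (Real.pi * |μ i₀|)) * (R ^ (d-1) / R ^ d) := by ring
        _ = (1 / (Real.pi * |μ i₀|)) * (1 / R) := by
            rw [pow_sub₀ _ hR0.ne' hd]
            field_simp
      -- done
    · simpa using (tendsto_inv_atTop_zero (𝕜 := ℝ)).const_mul (1 / (Real.pi * |μ i₀|))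

end helper

theorem stmt1 {d : ℕ} (Λ : Finset (EuclideanSpace ℝ (Fin d)))
    (a : EuclideanSpace ℝ (Fin d) → ℂ)
    (P : EuclideanSpace ℝ (Fin d) → ℂ)
    (hP : ∀ x, P x = ∑ l ∈ Λ, a l *
      Complex.exp (2 * Real.pi * Complex.I * ((inner ℝ l x : ℝ) : ℂ)))
    (hN : Filter.limsup
      (fun R : ℝ => (1 / R ^ d) *
        ∫ x in {x : EuclideanSpace ℝ (Fin d) | ∀ i, |x i| ≤ R / 2}, ‖P x‖)
      atTop = 0) :
    ∀ x, P x = 0 := by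
  classical
  set box : ℝ → Set (EuclideanSpace ℝ (Fin d)) :=
    fun R => {x : EuclideanSpace ℝ (Fin d) | ∀ i, |x i| ≤ R / 2} with hbox
  set hfun : ℝ → ℝ := fun R => (1 / R ^ d) * ∫ x in box R, ‖P x‖ with hhfun
  -- P is continuous
  have hPcont : Continuous P := by
    rw [funext hP]
    exact continuous_finset_sum _ fun l _ => continuous_const.mul (char_continuous l)
  set C : ℝ := ∑ l ∈ Λ, ‖a l‖ with hC
  have habs : ∀ x, ‖P x‖ ≤ C := by
    intro x
    rw [hP x, hC]
    refine (norm_sum_le _ _).trans (le_of_eq (Finset.sum_congr rfl fun l _ => ?_))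
    rw [norm_mul, norm_exp_I_mul' _ (by simp), mul_one]
  -- hfun → 0
  have hupper : ∀ᶠ R : ℝ in atTop, hfun R ≤ C := by
    filter_upwards [eventually_ge_atTop (1:ℝ)] with R hR
    have hR0 : (0:ℝ) < R := lt_of_lt_of_le one_pos hR
    have h1 : ∫ x in box R, ‖P x‖ ≤ C * R ^ d := by
      have h2 := norm_setIntegral_le_of_norm_le_const (μ := volume) (s := box R)
        (f := fun x => (‖P x‖ : ℝ)) (C := C)
        ((vol_box_ne_top R).lt_top)
        (fun x _ => by rw [Real.norm_of_nonneg (norm_nonneg _)]; exact habs x)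
      refine (le_abs_self _).trans ?_
      rw [← Real.norm_eq_abs]
      refine h2.trans ?_
      rw [Measure.real, vol_box, ENNReal.toReal_pow, ENNReal.toReal_ofReal hR0.le]
    have hRd : (0:ℝ) < R ^ d := by positivity
    calc hfun R ≤ (1 / R ^ d) * (C * R ^ d) := by
          exact mul_le_mul_of_nonneg_left h1 (by positivity)
      _ = C := by field_simp
  have hlower : ∀ᶠ R : ℝ in atTop, 0 ≤ hfun R := by
    filter_upwards [eventually_ge_atTop (0:ℝ)] with R hR
    exact mul_nonneg (by positivity) (integral_nonneg fun x => norm_nonneg _)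
  have hbdd_above : IsBoundedUnder (· ≤ ·) atTop hfun :=
    isBoundedUnder_of_eventually_le hupper
  have hbdd_below : IsBoundedUnder (· ≥ ·) atTop hfun :=
    isBoundedUnder_of_eventually_ge hlower
  have htends : Tendsto hfun atTop (𝓝 0) := by
    refine tendsto_of_le_liminf_of_limsup_le ?_ (le_of_eq hN) hbdd_above hbdd_below
    exact le_liminf_of_le hbdd_above.isCoboundedUnder_ge hlower
  -- coefficients vanish
  have hcoef : ∀ l₀ ∈ Λ, a l₀ = 0 := by
    intro l₀ hl₀
    set G : ℝ → ℂ := fun R => (1 / (R:ℂ) ^ d) *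
      ∫ x in box R, P x * Complex.exp (2 * Real.pi * Complex.I *
        ((inner ℝ (-l₀ : EuclideanSpace ℝ (Fin d)) x : ℝ) : ℂ)) with hG
    -- pointwise expansion
    have hpt : ∀ x : EuclideanSpace ℝ (Fin d),
        P x * Complex.exp (2 * Real.pi * Complex.I *
          ((inner ℝ (-l₀ : EuclideanSpace ℝ (Fin d)) x : ℝ) : ℂ))
        = ∑ l ∈ Λ, a l * Complex.exp (2 * Real.pi * Complex.I *
            ((inner ℝ (l - l₀ : EuclideanSpace ℝ (Fin d)) x : ℝ) : ℂ)) := by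
      intro x
      rw [hP x, Finset.sum_mul]
      refine Finset.sum_congr rfl fun l _ => ?_
      rw [mul_assoc, ← Complex.exp_add, ← mul_add, ← Complex.ofReal_add, ← inner_add_left]
      norm_num [sub_eq_add_neg]
    have hGeq : ∀ R : ℝ, G R = ∑ l ∈ Λ, a l * ((1 / (R:ℂ) ^ d) *
        ∫ x in box R, Complex.exp (2 * Real.pi * Complex.I *
          ((inner ℝ (l - l₀ : EuclideanSpace ℝ (Fin d)) x : ℝ) : ℂ))) := by
      intro R
      simp only [hG]
      have : ∫ x in box R, P x * Complex.exp (2 * Real.pi * Complex.I *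
          ((inner ℝ (-l₀ : EuclideanSpace ℝ (Fin d)) x : ℝ) : ℂ))
          = ∑ l ∈ Λ, a l * ∫ x in box R, Complex.exp (2 * Real.pi * Complex.I *
              ((inner ℝ (l - l₀ : EuclideanSpace ℝ (Fin d)) x : ℝ) : ℂ)) := by
        rw [show (fun x => P x * Complex.exp (2 * Real.pi * Complex.I *
          ((inner ℝ (-l₀ : EuclideanSpace ℝ (Fin d)) x : ℝ) : ℂ)))
          = fun x => ∑ l ∈ Λ, a l * Complex.exp (2 * Real.pi * Complex.I *
            ((inner ℝ (l - l₀ : EuclideanSpace ℝ (Fin d)) x : ℝ) : ℂ)) from funext hpt]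
        rw [integral_finset_sum _ fun l _ => ((char_integrableOn (l - l₀) R).const_mul (a l))]
        exact Finset.sum_congr rfl fun l _ => integral_const_mul _ _
      rw [this, Finset.mul_sum]
      exact Finset.sum_congr rfl fun l _ => by ring
    -- G tends to a l₀
    have hGlim : Tendsto G atTop (𝓝 (a l₀)) := by
      rw [funext hGeq]
      have hs : ∀ l ∈ Λ, Tendsto (fun R : ℝ => a l * ((1 / (R:ℂ) ^ d) *
          ∫ x in box R, Complex.exp (2 * Real.pi * Complex.I *
            ((inner ℝ (l - l₀ : EuclideanSpace ℝ (Fin d)) x : ℝ) : ℂ))))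
          atTop (𝓝 (if l = l₀ then a l else 0)) := by
        intro l _
        by_cases h : l = l₀
        · rw [if_pos h, h]
          have := (F_tendsto_zero (d := d)).const_mul (a l₀)
          rw [mul_one] at this
          simpa [sub_self] using this
        · rw [if_neg h]
          have := (F_tendsto_ne (l - l₀) (sub_ne_zero.mpr h)).const_mul (a l)
          rw [mul_zero] at this
          exact this
      have := tendsto_finset_sum Λ hs
      rwa [Finset.sum_ite_eq' Λ l₀ a, if_pos hl₀] at this
    -- norm bound
    have hbound : ∀ᶠ R : ℝ in atTop, ‖G R‖ ≤ hfun R := by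
      filter_upwards [eventually_gt_atTop (0:ℝ)] with R hR0
      simp only [hG, norm_mul]
      have hn1 : ‖(1 / (R:ℂ) ^ d)‖ = 1 / R ^ d := by
        rw [norm_div, norm_one, norm_pow, Complex.norm_real, Real.norm_of_nonneg hR0.le]
      rw [hn1, hhfun]
      refine mul_le_mul_of_nonneg_left ?_ (by positivity)
      refine (norm_integral_le_integral_norm _).trans (le_of_eq ?_)
      refine integral_congr_ae (ae_of_all _ fun x => ?_)
      show ‖P x * _‖ = _
      rw [norm_mul, norm_exp_I_mul' _ (by simp), mul_one]
    have hnormlim : Tendsto (fun R => ‖G R‖) atTop (𝓝 0) :=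
      squeeze_zero' (Eventually.of_forall fun R => norm_nonneg _) hbound htends
    have : ‖a l₀‖ = 0 := tendsto_nhds_unique hGlim.norm hnormlim
    exact norm_eq_zero.mp this
  intro x
  rw [hP x]
  exact Finset.sum_eq_zero fun l hl => by rw [hcoef l hl, zero_mul]
end

section
/- Let a : ℝ → ℝᵈ be continuous and A : ℝ → ℝ^{d×d} be continuous with A(ξ) symmetric nonnegative for all ξ, and let M > 0. Suppose that for every (τ,κ) ∈ ℝ^{d+1} with τ² + |κ|² = 1, the set {ξ ∈ ℝ : |ξ| ≤ M, τ + a(ξ)·κ = 0, κᵀA(ξ)κ = 0} has one-dimensional Lebesgue measure zero. Then for every δ > 0, ω_δ(ℓ) := sup_{|τ|+|κ| ≥ δ} ∫_{|ξ| ≤ M} ℓ / (ℓ + |τ + a(ξ)·κ|² + (κᵀA(ξ)κ)²) dξ tends to 0 as ℓ → 0⁺. -/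
open MeasureTheory Filter Topology

noncomputable def Dq {d : ℕ} (a : ℝ → EuclideanSpace ℝ (Fin d))
    (A : ℝ → Matrix (Fin d) (Fin d) ℝ) (p : ℝ × EuclideanSpace ℝ (Fin d)) (ξ : ℝ) : ℝ :=
  |p.1 + ∑ i, a ξ i * p.2 i| ^ 2 + (∑ i, ∑ j, p.2 i * A ξ i j * p.2 j) ^ 2

section helpers

variable {d : ℕ} {a : ℝ → EuclideanSpace ℝ (Fin d)} {A : ℝ → Matrix (Fin d) (Fin d) ℝ}

lemma Dq_nonneg (p : ℝ × EuclideanSpace ℝ (Fin d)) (ξ : ℝ) : 0 ≤ Dq a A p ξ := by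
  unfold Dq; positivity

lemma Dq_cont (ha : Continuous a) (hA : Continuous A) :
    Continuous fun q : (ℝ × EuclideanSpace ℝ (Fin d)) × ℝ => Dq a A q.1 q.2 := by
  unfold Dq; fun_prop

lemma Dq_cont_xi (ha : Continuous a) (hA : Continuous A) (p : ℝ × EuclideanSpace ℝ (Fin d)) :
    Continuous fun ξ : ℝ => Dq a A p ξ :=
  (Dq_cont ha hA).comp (Continuous.prodMk_right p)

lemma Dq_cont_p (ha : Continuous a) (hA : Continuous A) (ξ : ℝ) :
    Continuous fun p : ℝ × EuclideanSpace ℝ (Fin d) => Dq a A p ξ :=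
  (Dq_cont ha hA).comp (Continuous.prodMk_left ξ)

lemma frac_mono {m m' D : ℝ} (hm : 0 < m) (hmm : m ≤ m') (hD : 0 ≤ D) :
    m / (m + D) ≤ m' / (m' + D) := by
  rw [div_le_div_iff₀ (by linarith) (by linarith)]; nlinarith

lemma frac_le_one {m D : ℝ} (hm : 0 < m) (hD : 0 ≤ D) : m / (m + D) ≤ 1 :=
  div_le_one_of_le₀ (by linarith) (by linarith)

lemma frac_key {ℓ m c D D' : ℝ} (hℓ : 0 < ℓ) (hc : 0 < c) (hD' : 0 ≤ D')
    (hcd : c * D' ≤ D) (hm : ℓ ≤ m * c) :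
    ℓ / (ℓ + D) ≤ m / (m + D') := by
  have hm0 : 0 < m := by nlinarith
  rw [div_le_div_iff₀ (by nlinarith) (by nlinarith)]
  nlinarith [mul_le_mul_of_nonneg_right hm hD']

lemma Dq_scale (r : ℝ) (p : ℝ × EuclideanSpace ℝ (Fin d)) (ξ : ℝ) (hr : 0 ≤ r) :
    Dq a A (r * p.1, r • p.2) ξ =
      r ^ 2 * |p.1 + ∑ i, a ξ i * p.2 i| ^ 2 +
      r ^ 4 * (∑ i, ∑ j, p.2 i * A ξ i j * p.2 j) ^ 2 := by
  unfold Dq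
  have h1 : ∑ i, a ξ i * (r • p.2) i = r * ∑ i, a ξ i * p.2 i := by
    rw [Finset.mul_sum]
    exact Finset.sum_congr rfl fun i _ => by simp [PiLp.smul_apply]; ring
  have h2 : (∑ i, ∑ j, (r • p.2) i * A ξ i j * (r • p.2) j) =
      r ^ 2 * ∑ i, ∑ j, p.2 i * A ξ i j * p.2 j := by
    rw [Finset.mul_sum]
    refine Finset.sum_congr rfl fun i _ => ?_
    rw [Finset.mul_sum]
    exact Finset.sum_congr rfl fun j _ => by simp [PiLp.smul_apply]; ring
  simp only [h1, h2]
  have h3 : |r * p.1 + r * ∑ i, a ξ i * p.2 i| = r * |p.1 + ∑ i, a ξ i * p.2 i| := by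
    rw [← mul_add, abs_mul, abs_of_nonneg hr]
  rw [h3]
  ring

lemma Dq_scale_ge (r : ℝ) (p : ℝ × EuclideanSpace ℝ (Fin d)) (ξ : ℝ) (hr : 0 < r) :
    min (r ^ 2) (r ^ 4) * Dq a A p ξ ≤ Dq a A (r * p.1, r • p.2) ξ := by
  rw [Dq_scale r p ξ hr.le]
  have h1 : min (r ^ 2) (r ^ 4) ≤ r ^ 2 := min_le_left _ _
  have h2 : min (r ^ 2) (r ^ 4) ≤ r ^ 4 := min_le_right _ _
  unfold Dq
  nlinarith [sq_nonneg (|p.1 + ∑ i, a ξ i * p.2 i|),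
    sq_nonneg (∑ i, ∑ j, p.2 i * A ξ i j * p.2 j)]

lemma integrand_cont (ha : Continuous a) (hA : Continuous A) {m : ℝ} (hm : 0 < m)
    (p : ℝ × EuclideanSpace ℝ (Fin d)) :
    Continuous fun ξ : ℝ => m / (m + Dq a A p ξ) := by
  apply continuous_const.div (continuous_const.add (Dq_cont_xi ha hA p))
  intro ξ; have := Dq_nonneg (a := a) (A := A) p ξ; exact (show (0:ℝ) < m + Dq a A p ξ by linarith).ne'

lemma g_integrable (ha : Continuous a) (hA : Continuous A) {m : ℝ} (hm : 0 < m) (M : ℝ)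
    (p : ℝ × EuclideanSpace ℝ (Fin d)) :
    IntegrableOn (fun ξ : ℝ => m / (m + Dq a A p ξ)) (Set.Icc (-M) M) :=
  (integrand_cont ha hA hm p).integrableOn_Icc

lemma g_mono (ha : Continuous a) (hA : Continuous A) {m m' : ℝ} (hm : 0 < m) (hmm : m ≤ m')
    (M : ℝ) (p : ℝ × EuclideanSpace ℝ (Fin d)) :
    (∫ ξ in Set.Icc (-M) M, m / (m + Dq a A p ξ)) ≤
      ∫ ξ in Set.Icc (-M) M, m' / (m' + Dq a A p ξ) := by
  refine setIntegral_mono_on (g_integrable ha hA hm M p)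
    (g_integrable ha hA (lt_of_lt_of_le hm hmm) M p) measurableSet_Icc fun ξ _ => ?_
  exact frac_mono hm hmm (Dq_nonneg p ξ)

lemma g_cont (ha : Continuous a) (hA : Continuous A) {m : ℝ} (hm : 0 < m) (M : ℝ) :
    Continuous fun p : ℝ × EuclideanSpace ℝ (Fin d) =>
      ∫ ξ in Set.Icc (-M) M, m / (m + Dq a A p ξ) := by
  rw [continuous_iff_continuousAt]
  intro p₀
  apply MeasureTheory.continuousAt_of_dominated (bound := fun _ => (1 : ℝ))
  · exact Eventually.of_forall fun p => (integrand_cont ha hA hm p).aestronglyMeasurable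
  · refine Eventually.of_forall fun p => Eventually.of_forall fun ξ => ?_
    have h0 := Dq_nonneg (a := a) (A := A) p ξ
    rw [Real.norm_eq_abs, abs_of_nonneg (by positivity)]
    exact frac_le_one hm h0
  · exact integrableOn_const measure_Icc_lt_top.ne
  · refine Eventually.of_forall fun ξ => ?_
    exact (continuous_const.div (continuous_const.add (Dq_cont_p ha hA ξ))
      (fun p => by have := Dq_nonneg (a := a) (A := A) p ξ; exact (show (0:ℝ) < m + Dq a A p ξ by linarith).ne')).continuousAt

lemma Dq_ae_pos (M : ℝ)
    (hnd : ∀ (τ : ℝ) (κ : EuclideanSpace ℝ (Fin d)), τ ^ 2 + ‖κ‖ ^ 2 = 1 →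
      volume {ξ : ℝ | |ξ| ≤ M ∧ τ + ∑ i, a ξ i * κ i = 0 ∧
        ∑ i, ∑ j, κ i * A ξ i j * κ j = 0} = 0)
    (p : ℝ × EuclideanSpace ℝ (Fin d)) (hp : p.1 ^ 2 + ‖p.2‖ ^ 2 = 1) :
    ∀ᵐ ξ ∂(volume.restrict (Set.Icc (-M) M)), 0 < Dq a A p ξ := by
  have hnull : (volume.restrict (Set.Icc (-M) M)) {ξ | Dq a A p ξ = 0} = 0 := by
    rw [Measure.restrict_apply' measurableSet_Icc]
    refine measure_mono_null ?_ (hnd p.1 p.2 hp)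
    rintro ξ ⟨h0, hmem⟩
    rw [Set.mem_Icc] at hmem
    have h0' : |p.1 + ∑ i, a ξ i * p.2 i| ^ 2 +
        (∑ i, ∑ j, p.2 i * A ξ i j * p.2 j) ^ 2 = 0 := h0
    have hxn : (0:ℝ) ≤ |p.1 + ∑ i, a ξ i * p.2 i| ^ 2 := sq_nonneg _
    have hyn : (0:ℝ) ≤ (∑ i, ∑ j, p.2 i * A ξ i j * p.2 j) ^ 2 := sq_nonneg _
    have hx : |p.1 + ∑ i, a ξ i * p.2 i| ^ 2 = 0 := by linarith
    have hy : (∑ i, ∑ j, p.2 i * A ξ i j * p.2 j) ^ 2 = 0 := by linarith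
    refine ⟨abs_le.2 ⟨hmem.1, hmem.2⟩, ?_, ?_⟩
    · exact abs_eq_zero.1 ((pow_eq_zero_iff (n := 2) (by norm_num)).1 hx)
    · exact (pow_eq_zero_iff (n := 2) (by norm_num)).1 hy
  have hne : ∀ᵐ ξ ∂(volume.restrict (Set.Icc (-M) M)), Dq a A p ξ ≠ 0 := by
    rw [ae_iff]; simpa [not_not] using hnull
  filter_upwards [hne] with ξ hξ
  exact lt_of_le_of_ne (Dq_nonneg p ξ) (Ne.symm hξ)

lemma g_pointwise (ha : Continuous a) (hA : Continuous A) (M : ℝ)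
    (hnd : ∀ (τ : ℝ) (κ : EuclideanSpace ℝ (Fin d)), τ ^ 2 + ‖κ‖ ^ 2 = 1 →
      volume {ξ : ℝ | |ξ| ≤ M ∧ τ + ∑ i, a ξ i * κ i = 0 ∧
        ∑ i, ∑ j, κ i * A ξ i j * κ j = 0} = 0)
    (p : ℝ × EuclideanSpace ℝ (Fin d)) (hp : p.1 ^ 2 + ‖p.2‖ ^ 2 = 1) :
    Tendsto (fun n : ℕ => ∫ ξ in Set.Icc (-M) M,
      (1 / (n + 1) : ℝ) / (1 / (n + 1) + Dq a A p ξ)) atTop (𝓝 0) := by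
  have key := MeasureTheory.tendsto_integral_of_dominated_convergence
    (μ := volume.restrict (Set.Icc (-M) M))
    (F := fun (n : ℕ) (ξ : ℝ) => (1 / (n + 1) : ℝ) / (1 / (n + 1) + Dq a A p ξ))
    (f := fun _ => (0 : ℝ)) (bound := fun _ => (1 : ℝ))
    (fun n => (integrand_cont ha hA (by positivity) p).aestronglyMeasurable)
    (integrableOn_const measure_Icc_lt_top.ne)
    (fun n => Eventually.of_forall fun ξ => by
      have h0 := Dq_nonneg (a := a) (A := A) p ξ
      have h1 : (0:ℝ) < 1 / (n + 1) := by positivity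
      rw [Real.norm_eq_abs, abs_of_nonneg (by positivity)]
      exact frac_le_one h1 h0)
    ?_
  · simpa using key
  · filter_upwards [Dq_ae_pos M hnd p hp] with ξ hξ
    have h1 : Tendsto (fun n : ℕ => (1 / (n + 1) : ℝ)) atTop (𝓝 0) :=
      tendsto_one_div_add_atTop_nhds_zero_nat
    have h2 : Tendsto (fun n : ℕ => (1 / (n + 1) : ℝ) + Dq a A p ξ) atTop
        (𝓝 (0 + Dq a A p ξ)) := h1.add tendsto_const_nhds
    have h3 := h1.div h2 (by simpa using hξ.ne')
    simpa [Pi.div_def] using h3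

lemma g_uniform (ha : Continuous a) (hA : Continuous A) (M : ℝ)
    (hnd : ∀ (τ : ℝ) (κ : EuclideanSpace ℝ (Fin d)), τ ^ 2 + ‖κ‖ ^ 2 = 1 →
      volume {ξ : ℝ | |ξ| ≤ M ∧ τ + ∑ i, a ξ i * κ i = 0 ∧
        ∑ i, ∑ j, κ i * A ξ i j * κ j = 0} = 0) :
    ∀ ε > 0, ∃ m : ℝ, 0 < m ∧ ∀ p : ℝ × EuclideanSpace ℝ (Fin d),
      p.1 ^ 2 + ‖p.2‖ ^ 2 = 1 →
      (∫ ξ in Set.Icc (-M) M, m / (m + Dq a A p ξ)) < ε := by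
  intro ε hε
  set S : Set (ℝ × EuclideanSpace ℝ (Fin d)) := {p | p.1 ^ 2 + ‖p.2‖ ^ 2 = 1} with hS
  have hScl : IsClosed S := isClosed_eq (by fun_prop) continuous_const
  have hSb : S ⊆ Metric.closedBall 0 1 := by
    intro p hp
    have hp' : p.1 ^ 2 + ‖p.2‖ ^ 2 = 1 := hp
    rw [Metric.mem_closedBall, dist_zero_right, Prod.norm_def]
    have h2 : (0:ℝ) ≤ ‖p.2‖ := norm_nonneg _
    have h1 : ‖p.1‖ ≤ 1 := by rw [Real.norm_eq_abs]; nlinarith [abs_nonneg p.1, sq_abs p.1]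
    exact max_le h1 (by nlinarith)
  have hScomp : IsCompact S :=
    (isCompact_closedBall (0 : ℝ × EuclideanSpace ℝ (Fin d)) 1).of_isClosed_subset hScl hSb
  have hpt : ∀ p ∈ S, ∃ m : ℝ, 0 < m ∧
      (∫ ξ in Set.Icc (-M) M, m / (m + Dq a A p ξ)) < ε / 2 := by
    intro p hp
    have hlim := g_pointwise ha hA M hnd p hp
    have hev : ∀ᶠ n : ℕ in atTop,
        (∫ ξ in Set.Icc (-M) M, (1 / (n + 1) : ℝ) / (1 / (n + 1) + Dq a A p ξ)) < ε / 2 :=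
      hlim.eventually_lt_const (by linarith)
    obtain ⟨n, hn⟩ := hev.exists
    exact ⟨1 / (n + 1), by positivity, hn⟩
  choose! m hm0 hmlt using hpt
  have hU : ∀ p (hp : p ∈ S),
      {q : ℝ × EuclideanSpace ℝ (Fin d) |
        (∫ ξ in Set.Icc (-M) M, m p / (m p + Dq a A q ξ)) < ε} ∈ 𝓝 p := by
    intro p hp
    refine (isOpen_lt (g_cont ha hA (hm0 p hp) M) continuous_const).mem_nhds ?_
    exact lt_trans (hmlt p hp) (by linarith)
  obtain ⟨t, ht⟩ := hScomp.elim_nhds_subcover' _ hU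
  have hSne : ((1 : ℝ), (0 : EuclideanSpace ℝ (Fin d))) ∈ S := by simp [hS]
  have htne : t.Nonempty := by
    rcases Finset.eq_empty_or_nonempty t with h | h
    · exfalso
      have := ht hSne
      simp [h] at this
    · exact h
  refine ⟨t.inf' htne (fun x => m x.1), ?_, ?_⟩
  · exact (Finset.lt_inf'_iff htne).2 fun x hx => hm0 x.1 x.2
  · intro p hp
    have hpS : p ∈ S := hp
    obtain ⟨q, hqt, hq⟩ : ∃ q ∈ t, (∫ ξ in Set.Icc (-M) M,
        m q.1 / (m q.1 + Dq a A p ξ)) < ε := by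
      have hcover := ht hpS
      simp only [Set.mem_iUnion, Set.mem_setOf_eq] at hcover
      obtain ⟨q, hq1, hq2⟩ := hcover
      exact ⟨q, hq1, hq2⟩
    calc (∫ ξ in Set.Icc (-M) M,
          t.inf' htne (fun x => m x.1) / (t.inf' htne (fun x => m x.1) + Dq a A p ξ))
        ≤ ∫ ξ in Set.Icc (-M) M, m q.1 / (m q.1 + Dq a A p ξ) := by
          refine g_mono ha hA ?_ (Finset.inf'_le _ hqt) M p
          exact (Finset.lt_inf'_iff htne).2 fun x hx => hm0 x.1 x.2
      _ < ε := hq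

end helpers

theorem stmt4 {d : ℕ} (a : ℝ → EuclideanSpace ℝ (Fin d))
    (A : ℝ → Matrix (Fin d) (Fin d) ℝ) (M : ℝ)
    (ha : Continuous a) (hA : Continuous A)
    (hsymm : ∀ ξ, (A ξ).IsSymm)
    (hnonneg : ∀ ξ (κ : EuclideanSpace ℝ (Fin d)), 0 ≤ ∑ i, ∑ j, κ i * A ξ i j * κ j)
    (hM : 0 < M)
    (hnd : ∀ (τ : ℝ) (κ : EuclideanSpace ℝ (Fin d)), τ ^ 2 + ‖κ‖ ^ 2 = 1 →
      volume {ξ : ℝ | |ξ| ≤ M ∧ τ + ∑ i, a ξ i * κ i = 0 ∧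
        ∑ i, ∑ j, κ i * A ξ i j * κ j = 0} = 0)
    (ω : ℝ → ℝ → ℝ)
    (hω : ∀ δ ℓ, ω δ ℓ =
      ⨆ p : {p : ℝ × EuclideanSpace ℝ (Fin d) // δ ≤ |p.1| + ‖p.2‖},
        ∫ ξ in Set.Icc (-M) M,
          ℓ / (ℓ + |p.1.1 + ∑ i, a ξ i * p.1.2 i| ^ 2 +
            (∑ i, ∑ j, p.1.2 i * A ξ i j * p.1.2 j) ^ 2)) :
    ∀ δ > 0, Tendsto (fun ℓ => ω δ ℓ) (𝓝[>] (0 : ℝ)) (𝓝 0) := by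
  intro δ hδ
  rw [Metric.tendsto_nhdsWithin_nhds]
  intro ε hε
  obtain ⟨m₀, hm₀, hunif⟩ := g_uniform ha hA M hnd (ε / 2) (by linarith)
  set c : ℝ := min ((δ / 2) ^ 2) ((δ / 2) ^ 4) with hc
  have hcpos : 0 < c := lt_min (by positivity) (by positivity)
  refine ⟨m₀ * c, by positivity, ?_⟩
  intro ℓ hℓ hdist
  have hℓpos : 0 < ℓ := hℓ
  have hℓlt : ℓ < m₀ * c := by
    rwa [Real.dist_eq, sub_zero, abs_of_pos hℓpos] at hdist
  have key : ∀ p : {p : ℝ × EuclideanSpace ℝ (Fin d) // δ ≤ |p.1| + ‖p.2‖},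
      (∫ ξ in Set.Icc (-M) M,
        ℓ / (ℓ + |p.1.1 + ∑ i, a ξ i * p.1.2 i| ^ 2 +
          (∑ i, ∑ j, p.1.2 i * A ξ i j * p.1.2 j) ^ 2)) ≤ ε / 2 := by
    rintro ⟨p, hp⟩
    have hrw : (∫ ξ in Set.Icc (-M) M,
        ℓ / (ℓ + |p.1 + ∑ i, a ξ i * p.2 i| ^ 2 +
          (∑ i, ∑ j, p.2 i * A ξ i j * p.2 j) ^ 2)) =
        ∫ ξ in Set.Icc (-M) M, ℓ / (ℓ + Dq a A p ξ) := by
      refine integral_congr_ae (Eventually.of_forall fun ξ => ?_)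
      unfold Dq; ring_nf
    rw [hrw]
    set r : ℝ := Real.sqrt (p.1 ^ 2 + ‖p.2‖ ^ 2) with hrdef
    have hr2 : r ^ 2 = p.1 ^ 2 + ‖p.2‖ ^ 2 := Real.sq_sqrt (by positivity)
    have hr1 : |p.1| ≤ r := by
      have h := Real.sqrt_le_sqrt (show p.1 ^ 2 ≤ p.1 ^ 2 + ‖p.2‖ ^ 2 by
        nlinarith [sq_nonneg ‖p.2‖])
      rwa [Real.sqrt_sq_eq_abs] at h
    have hr2' : ‖p.2‖ ≤ r := by
      have h := Real.sqrt_le_sqrt (show ‖p.2‖ ^ 2 ≤ p.1 ^ 2 + ‖p.2‖ ^ 2 by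
        nlinarith [sq_nonneg p.1])
      rwa [Real.sqrt_sq (norm_nonneg p.2)] at h
    have hrδ : δ / 2 ≤ r := by linarith
    have hrpos : 0 < r := lt_of_lt_of_le (by linarith) hrδ
    set pb : ℝ × EuclideanSpace ℝ (Fin d) := (p.1 / r, r⁻¹ • p.2) with hpb
    have hunit : pb.1 ^ 2 + ‖pb.2‖ ^ 2 = 1 := by
      have hn : ‖(r⁻¹ • p.2 : EuclideanSpace ℝ (Fin d))‖ = r⁻¹ * ‖p.2‖ := by
        rw [norm_smul, Real.norm_eq_abs, abs_of_pos (inv_pos.2 hrpos)]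
      simp only [hpb, hn]
      field_simp
      linarith [hr2]
    have hpe1 : r * pb.1 = p.1 := by
      simp only [hpb]; field_simp
    have hpe2 : r • pb.2 = p.2 := by
      simp only [hpb]; rw [smul_smul, mul_inv_cancel₀ hrpos.ne', one_smul]
    have hmin : c ≤ min (r ^ 2) (r ^ 4) := by
      refine le_min ?_ ?_
      · exact le_trans (min_le_left _ _) (pow_le_pow_left₀ (by positivity) hrδ 2)
      · exact le_trans (min_le_right _ _) (pow_le_pow_left₀ (by positivity) hrδ 4)
    have hpw : ∀ ξ : ℝ, ℓ / (ℓ + Dq a A p ξ) ≤ m₀ / (m₀ + Dq a A pb ξ) := by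
      intro ξ
      refine frac_key hℓpos (c := min (r ^ 2) (r ^ 4))
        (lt_of_lt_of_le hcpos hmin) (Dq_nonneg pb ξ) ?_ ?_
      · have := Dq_scale_ge (a := a) (A := A) r pb ξ hrpos
        rw [hpe1, hpe2] at this
        simpa using this
      · calc ℓ ≤ m₀ * c := hℓlt.le
          _ ≤ m₀ * min (r ^ 2) (r ^ 4) := by
              exact mul_le_mul_of_nonneg_left hmin hm₀.le
    calc (∫ ξ in Set.Icc (-M) M, ℓ / (ℓ + Dq a A p ξ))
        ≤ ∫ ξ in Set.Icc (-M) M, m₀ / (m₀ + Dq a A pb ξ) := by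
          refine setIntegral_mono_on (g_integrable ha hA hℓpos M p)
            (g_integrable ha hA hm₀ M pb) measurableSet_Icc fun ξ _ => hpw ξ
      _ ≤ ε / 2 := (hunif pb hunit).le
  have hnon : Nonempty {p : ℝ × EuclideanSpace ℝ (Fin d) // δ ≤ |p.1| + ‖p.2‖} :=
    ⟨⟨(δ, 0), by simp [abs_of_pos hδ]⟩⟩
  rw [Real.dist_eq, sub_zero, hω]
  have hub : (⨆ p : {p : ℝ × EuclideanSpace ℝ (Fin d) // δ ≤ |p.1| + ‖p.2‖},
      ∫ ξ in Set.Icc (-M) M,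
        ℓ / (ℓ + |p.1.1 + ∑ i, a ξ i * p.1.2 i| ^ 2 +
          (∑ i, ∑ j, p.1.2 i * A ξ i j * p.1.2 j) ^ 2)) ≤ ε / 2 := ciSup_le key
  have hlb : (0:ℝ) ≤ ⨆ p : {p : ℝ × EuclideanSpace ℝ (Fin d) // δ ≤ |p.1| + ‖p.2‖},
      ∫ ξ in Set.Icc (-M) M,
        ℓ / (ℓ + |p.1.1 + ∑ i, a ξ i * p.1.2 i| ^ 2 +
          (∑ i, ∑ j, p.1.2 i * A ξ i j * p.1.2 j) ^ 2) := by
    refine Real.iSup_nonneg fun p => integral_nonneg fun ξ => ?_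
    refine div_nonneg hℓpos.le ?_
    have h1 : (0:ℝ) ≤ |p.1.1 + ∑ i, a ξ i * p.1.2 i| ^ 2 := sq_nonneg _
    have h2 : (0:ℝ) ≤ (∑ i, ∑ j, p.1.2 i * A ξ i j * p.1.2 j) ^ 2 := sq_nonneg _
    linarith
  rw [abs_of_nonneg hlb]
  linarith
end
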